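/- For all real θ with π/(6n+4) ≤ θ ≤ π/6 and integer n ≥ 1, |∏_{k=0}^{n} cos((3k+1)θ) cos((3k+2)θ)| ≤ exp(−(42n+43)/64 + 33(6n+4)/(128π(1 − 6π²/(12n+8)²))). -/

import Mathlib

open Finset


lemma exp_cubic_lb {t : ℝ} (h0 : 0 ≤ t) (h1 : t ≤ 1) :
    1 - t + t^2/2 - 2*t^3/9 ≤ Real.exp (-t) := by
  have h := Real.exp_bound (x := -t) (by rwa [abs_neg, abs_of_nonneg h0]) (n := 3) (by norm_num)
  rw [abs_neg, abs_of_nonneg h0] at h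
  have hsum : ∑ m ∈ Finset.range 3, (-t) ^ m / (m.factorial : ℝ) = 1 - t + t^2/2 := by
    simp [Finset.sum_range_succ, Nat.factorial]
    ring
  rw [hsum] at h
  norm_num [Nat.factorial] at h
  have := (abs_le.mp h).1
  nlinarith

lemma one_sub_le_exp_quad {t : ℝ} (h0 : 0 ≤ t) (h1 : t ≤ 1) :
    1 - t ≤ Real.exp (-(t + t^2/2)) := by
  have hA := exp_cubic_lb h0 h1
  have hB : 1 - t^2/2 ≤ Real.exp (-(t^2/2)) := Real.one_sub_le_exp_neg _
  have hmul : (1 - t + t^2/2 - 2*t^3/9) * (1 - t^2/2)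
      ≤ Real.exp (-t) * Real.exp (-(t^2/2)) := by
    apply mul_le_mul hA hB (by nlinarith) (Real.exp_nonneg _)
  rw [← Real.exp_add] at hmul
  have he : (-t) + (-(t^2/2)) = -(t + t^2/2) := by ring
  rw [he] at hmul
  nlinarith [mul_nonneg (pow_nonneg h0 3) (sq_nonneg (t - 9/8)), pow_nonneg h0 3]

lemma abs_cos_le (y : ℝ) :
    |Real.cos y| ≤ Real.exp (-(Real.sin y^2/2 + Real.sin y^4/4)) := by
  have ht0 : (0:ℝ) ≤ Real.sin y^2 := sq_nonneg _
  have ht1 : Real.sin y^2 ≤ 1 := Real.sin_sq_le_one y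
  have h := one_sub_le_exp_quad ht0 ht1
  have hc : Real.cos y^2 = 1 - Real.sin y^2 := Real.cos_sq' y
  have he : Real.exp (-(Real.sin y^2 + (Real.sin y^2)^2/2))
      = Real.exp (-(Real.sin y^2/2 + Real.sin y^4/4)) ^ 2 := by
    rw [← Real.exp_nat_mul]
    congr 1
    push_cast
    ring
  have hsq : |Real.cos y| ^ 2 ≤ Real.exp (-(Real.sin y^2/2 + Real.sin y^4/4)) ^ 2 := by
    rw [sq_abs, hc, ← he]; exact h
  calc |Real.cos y| = Real.sqrt (|Real.cos y| ^ 2) := (Real.sqrt_sq (abs_nonneg _)).symm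
    _ ≤ Real.sqrt (Real.exp (-(Real.sin y^2/2 + Real.sin y^4/4)) ^ 2) := Real.sqrt_le_sqrt hsq
    _ = _ := Real.sqrt_sq (Real.exp_nonneg _)


lemma sum_cos_identity (x : ℝ) : ∀ N : ℕ,
    2 * Real.sin (x/2) * ∑ m ∈ Finset.range N, Real.cos (((m:ℝ)+1) * x)
      = Real.sin (((N:ℝ) + 1/2) * x) - Real.sin (x/2)
  | 0 => by
    simp
    ring_nf
  | (N+1) => by
    rw [Finset.sum_range_succ, mul_add, sum_cos_identity x N]
    push_cast
    have e1 : ((N:ℝ)+1+1/2)*x = ((N:ℝ)+1)*x + x/2 := by ring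
    have e2 : ((N:ℝ)+1/2)*x = ((N:ℝ)+1)*x - x/2 := by ring
    rw [e1, e2, Real.sin_add, Real.sin_sub]
    ring

lemma sum_cos_bound {x : ℝ} (hs : 0 < Real.sin (x/2)) (N : ℕ) :
    |∑ m ∈ Finset.range N, Real.cos (((m:ℝ)+1) * x) + 1/2| ≤ 1/(2*Real.sin (x/2)) := by
  have hid := sum_cos_identity x N
  set s := Real.sin (x/2) with hsdef
  set SS := ∑ m ∈ Finset.range N, Real.cos (((m:ℝ)+1) * x) with hSS
  have hprod : (SS + 1/2) * (2*s) = Real.sin (((N:ℝ) + 1/2) * x) := by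
    linear_combination hid
  have hS1 : Real.sin (((N:ℝ) + 1/2) * x) ≤ 1 := Real.sin_le_one _
  have hS2 : -1 ≤ Real.sin (((N:ℝ) + 1/2) * x) := Real.neg_one_le_sin _
  have h2s : 0 < 2*s := by linarith
  rw [abs_le]
  constructor
  · rw [neg_le, le_div_iff₀ h2s]
    nlinarith
  · rw [le_div_iff₀ h2s]
    nlinarith

lemma regroup (x : ℝ) : ∀ K : ℕ,
    ∑ k ∈ Finset.range (K+1), (Real.cos ((3*(k:ℝ)+1) * x) + Real.cos ((3*(k:ℝ)+2) * x))
      = ∑ m ∈ Finset.range (3*K+2), Real.cos (((m:ℝ)+1) * x)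
        - ∑ k ∈ Finset.range K, Real.cos (((k:ℝ)+1) * (3*x))
  | 0 => by
    simp [Finset.sum_range_succ]
    ring_nf
  | (K+1) => by
    have hL : ∑ k ∈ Finset.range (K+1+1),
        (Real.cos ((3*(k:ℝ)+1) * x) + Real.cos ((3*(k:ℝ)+2) * x))
        = (∑ k ∈ Finset.range (K+1), (Real.cos ((3*(k:ℝ)+1) * x) + Real.cos ((3*(k:ℝ)+2) * x)))
          + (Real.cos ((3*((K:ℕ):ℝ)+4) * x) + Real.cos ((3*((K:ℕ):ℝ)+5) * x)) := by
      rw [Finset.sum_range_succ]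
      set A := ∑ k ∈ Finset.range (K+1), (Real.cos ((3*(k:ℝ)+1) * x) + Real.cos ((3*(k:ℝ)+2) * x))
      push_cast
      ring_nf
    have hR1 : ∑ m ∈ Finset.range (3*(K+1)+2), Real.cos (((m:ℝ)+1) * x)
        = (∑ m ∈ Finset.range (3*K+2), Real.cos (((m:ℝ)+1) * x))
          + Real.cos ((3*((K:ℕ):ℝ)+3) * x) + Real.cos ((3*((K:ℕ):ℝ)+4) * x)
          + Real.cos ((3*((K:ℕ):ℝ)+5) * x) := by
      have e : 3*(K+1)+2 = ((3*K+2)+1+1)+1 := by ring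
      rw [e, Finset.sum_range_succ, Finset.sum_range_succ (n := (3*K+2)+1),
        Finset.sum_range_succ (n := 3*K+2)]
      set B := ∑ m ∈ Finset.range (3*K+2), Real.cos (((m:ℝ)+1) * x)
      push_cast
      ring_nf
    have hR2 : ∑ k ∈ Finset.range (K+1), Real.cos (((k:ℝ)+1) * (3*x))
        = (∑ k ∈ Finset.range K, Real.cos (((k:ℝ)+1) * (3*x)))
          + Real.cos ((3*((K:ℕ):ℝ)+3) * x) := by
      rw [Finset.sum_range_succ]
      set C := ∑ k ∈ Finset.range K, Real.cos (((k:ℝ)+1) * (3*x))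
      push_cast
      ring_nf
    rw [hL, hR1, hR2, regroup x K]
    ring


lemma g_id (a t : ℝ) : Real.sin (a*t)^2/2 + Real.sin (a*t)^4/4
    = (11 - 12*Real.cos (a*(2*t)) + Real.cos (a*(4*t)))/32 := by
  have h2 : Real.cos (2*(a*t)) = 2*Real.cos (a*t)^2 - 1 := Real.cos_two_mul _
  have h4 : Real.cos (2*(2*(a*t))) = 2*Real.cos (2*(a*t))^2 - 1 := Real.cos_two_mul _
  have e2 : a*(2*t) = 2*(a*t) := by ring
  have e4 : a*(4*t) = 2*(2*(a*t)) := by ring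
  rw [e2, e4, h4, h2]
  have hs := Real.sin_sq_add_cos_sq (a*t)
  linear_combination ((3 + Real.sin (a*t)^2 - Real.cos (a*t)^2)/4) * hs


set_option maxHeartbeats 1000000 in
lemma key_lemma {p : ℝ} (hp0 : 0 < p) (hp3 : 3*p ≤ 1) :
    12*(1/(2*(p - p^3/4))) + 12*(1/(2*(3*p - (3*p)^3/4))) + 1/(2*(2*p - (2*p)^3/4))
      ≤ 33/(4*p*(1 - (3/2)*p^2)) := by
  have hu9 : p^2 ≤ 1/9 := by nlinarith [mul_nonneg hp0.le (by linarith : (0:ℝ) ≤ 1/3 - p)]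
  have hpd1 : (0:ℝ) < 1 - p^2/4 := by nlinarith
  have hpd2 : (0:ℝ) < 1 - p^2 := by nlinarith
  have hpd3 : (0:ℝ) < 1 - (9/4)*p^2 := by nlinarith
  have hD0 : (0:ℝ) < 1 - (3/2)*p^2 := by nlinarith
  have hq1 : (0:ℝ) < p - p^3/4 := by nlinarith
  have hq2 : (0:ℝ) < 2*p - (2*p)^3/4 := by nlinarith
  have hq3 : (0:ℝ) < 3*p - (3*p)^3/4 := by nlinarith
  rw [le_div_iff₀ (by positivity : (0:ℝ) < 4*p*(1 - (3/2)*p^2))]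
  have hx1 : (1/(2*(p - p^3/4))) * p = 1/(2*(1-p^2/4)) := by
    rw [div_mul_eq_mul_div, div_eq_div_iff (by linarith) (by linarith)]
    ring
  have hx3 : (1/(2*(3*p - (3*p)^3/4))) * p = 1/(6*(1-(9/4)*p^2)) := by
    rw [div_mul_eq_mul_div, div_eq_div_iff (by linarith) (by linarith)]
    ring
  have hx2 : (1/(2*(2*p - (2*p)^3/4))) * p = 1/(4*(1-p^2)) := by
    rw [div_mul_eq_mul_div, div_eq_div_iff (by linarith) (by linarith)]
    ring
  have expand : (12*(1/(2*(p - p^3/4))) + 12*(1/(2*(3*p - (3*p)^3/4)))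
      + 1/(2*(2*p - (2*p)^3/4))) * (4*p*(1 - (3/2)*p^2))
      = 4*(1 - (3/2)*p^2)*(12*((1/(2*(p - p^3/4)))*p) + 12*((1/(2*(3*p - (3*p)^3/4)))*p)
          + (1/(2*(2*p - (2*p)^3/4)))*p) := by ring
  rw [expand, hx1, hx3, hx2]
  have y1 : 1/(2*(1-p^2/4)) ≤ (1+p^2/3)/2 := by
    rw [div_le_div_iff₀ (by linarith) (by norm_num)]
    nlinarith
  have y3 : 1/(6*(1-(9/4)*p^2)) ≤ (1+3*p^2)/6 := by
    rw [div_le_div_iff₀ (by linarith) (by norm_num)]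
    nlinarith
  have y2 : 1/(4*(1-p^2)) ≤ (1+(4/3)*p^2)/4 := by
    rw [div_le_div_iff₀ (by linarith) (by norm_num)]
    nlinarith
  have hsum : 12*(1/(2*(1-p^2/4))) + 12*(1/(6*(1-(9/4)*p^2))) + 1/(4*(1-p^2))
      ≤ 33/4 + (25/3)*p^2 := by linarith
  calc 4*(1 - (3/2)*p^2)*(12*(1/(2*(1-p^2/4))) + 12*(1/(6*(1-(9/4)*p^2))) + 1/(4*(1-p^2)))
      ≤ 4*(1 - (3/2)*p^2)*(33/4 + (25/3)*p^2) :=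
        mul_le_mul_of_nonneg_left hsum (by linarith)
    _ ≤ 33 := by nlinarith [sq_nonneg p, sq_nonneg (p*p)]


set_option maxHeartbeats 1000000 in
theorem borwein_product_bound_small (n : ℕ) (hn : 1 ≤ n) (θ : ℝ)
    (h1 : Real.pi / (6 * n + 4) ≤ θ) (h2 : θ ≤ Real.pi / 6) :
    |∏ k ∈ Finset.range (n + 1),
        (Real.cos ((3 * k + 1) * θ) * Real.cos ((3 * k + 2) * θ))| ≤
      Real.exp (-(42 * n + 43) / 64 +
        33 * (6 * n + 4) /
          (128 * Real.pi * (1 - 6 * Real.pi ^ 2 / (12 * n + 8) ^ 2))) := by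
  have hπ : 0 < Real.pi := Real.pi_pos
  have hπ315 : Real.pi < 3.15 := by
    have := Real.pi_lt_d2
    linarith
  have hn1 : (1:ℝ) ≤ (n:ℝ) := by exact_mod_cast hn
  set m : ℝ := 6 * (n:ℝ) + 4 with hm
  have hm10 : (10:ℝ) ≤ m := by rw [hm]; linarith
  have hm0 : 0 < m := by linarith
  set p : ℝ := Real.pi / m with hp
  have hp0 : 0 < p := div_pos hπ hm0
  have hmp : m * p = Real.pi := by
    rw [hp]; field_simp
  have hp3 : 3 * p ≤ 1 := by
    rw [hp, ← mul_div_assoc, div_le_one hm0]; nlinarith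
  have hθ0 : 0 < θ := lt_of_lt_of_le hp0 h1
  clear_value m p
  have hu9 : p^2 ≤ 1/9 := by nlinarith [mul_nonneg hp0.le (by linarith : (0:ℝ) ≤ 1/3 - p)]
  have hcube : p^3 ≤ p/9 := by
    nlinarith [mul_le_mul_of_nonneg_left hu9 hp0.le]
  -- sin lower bounds
  have sinb : ∀ j : ℝ, 1 ≤ j → j ≤ 3 → j*p - (j*p)^3/4 ≤ Real.sin (j*θ) := by
    intro j hj1 hj3
    have hjp0 : 0 < j*p := mul_pos (by linarith) hp0
    have hjp1 : j*p ≤ 1 := by nlinarith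
    have hmono : Real.sin (j*p) ≤ Real.sin (j*θ) := by
      apply Real.sin_le_sin_of_le_of_le_pi_div_two
      · linarith
      · nlinarith
      · nlinarith
    have := Real.sin_gt_sub_cube hjp0
    linarith [pow_pos hjp0 3]
  have hb1 : p - p^3/4 ≤ Real.sin θ := by
    have := sinb 1 le_rfl (by norm_num)
    simpa using this
  have hb2 : 2*p - (2*p)^3/4 ≤ Real.sin (2*θ) := sinb 2 (by norm_num) (by norm_num)
  have hb3 : 3*p - (3*p)^3/4 ≤ Real.sin (3*θ) := sinb 3 (by norm_num) le_rfl
  have hq1 : 0 < p - p^3/4 := by nlinarith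
  have hq2 : 0 < 2*p - (2*p)^3/4 := by nlinarith
  have hq3 : 0 < 3*p - (3*p)^3/4 := by nlinarith
  have hs1 : 0 < Real.sin θ := lt_of_lt_of_le hq1 hb1
  have hs2 : 0 < Real.sin (2*θ) := lt_of_lt_of_le hq2 hb2
  have hs3 : 0 < Real.sin (3*θ) := lt_of_lt_of_le hq3 hb3
  -- step 1 : product bounded by exp of sum
  set T : ℝ := ∑ k ∈ Finset.range (n+1),
      (-(Real.sin ((3*(k:ℝ)+1)*θ)^2/2 + Real.sin ((3*(k:ℝ)+1)*θ)^4/4)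
        + -(Real.sin ((3*(k:ℝ)+2)*θ)^2/2 + Real.sin ((3*(k:ℝ)+2)*θ)^4/4)) with hT
  clear_value T
  have step1 : |∏ k ∈ Finset.range (n + 1),
      (Real.cos ((3 * (k:ℝ) + 1) * θ) * Real.cos ((3 * (k:ℝ) + 2) * θ))| ≤ Real.exp T := by
    rw [Finset.abs_prod]
    calc ∏ k ∈ Finset.range (n+1), |Real.cos ((3*(k:ℝ)+1)*θ) * Real.cos ((3*(k:ℝ)+2)*θ)|
        ≤ ∏ k ∈ Finset.range (n+1),
            (Real.exp (-(Real.sin ((3*(k:ℝ)+1)*θ)^2/2 + Real.sin ((3*(k:ℝ)+1)*θ)^4/4))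
             * Real.exp (-(Real.sin ((3*(k:ℝ)+2)*θ)^2/2 + Real.sin ((3*(k:ℝ)+2)*θ)^4/4))) := by
          apply Finset.prod_le_prod
          · intro k _
            exact abs_nonneg _
          · intro k _
            rw [abs_mul]
            exact mul_le_mul (abs_cos_le _) (abs_cos_le _) (abs_nonneg _) (Real.exp_nonneg _)
      _ = Real.exp T := by
          rw [hT, Real.exp_sum]
          exact Finset.prod_congr rfl (fun k _ => (Real.exp_add _ _).symm)
  -- step 2: closed form for T
  set C2 : ℝ := ∑ k ∈ Finset.range (n+1),
      (Real.cos ((3*(k:ℝ)+1) * (2*θ)) + Real.cos ((3*(k:ℝ)+2) * (2*θ))) with hC2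
  set C4 : ℝ := ∑ k ∈ Finset.range (n+1),
      (Real.cos ((3*(k:ℝ)+1) * (4*θ)) + Real.cos ((3*(k:ℝ)+2) * (4*θ))) with hC4
  clear_value C2 C4
  have hTval : T = ((n:ℝ)+1)*(-22/32) + (12/32)*C2 - (1/32)*C4 := by
    rw [hT]
    have hpoint : ∀ k ∈ Finset.range (n+1),
        (-(Real.sin ((3*(k:ℝ)+1)*θ)^2/2 + Real.sin ((3*(k:ℝ)+1)*θ)^4/4)
          + -(Real.sin ((3*(k:ℝ)+2)*θ)^2/2 + Real.sin ((3*(k:ℝ)+2)*θ)^4/4))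
        = -22/32 + (12/32)*(Real.cos ((3*(k:ℝ)+1) * (2*θ)) + Real.cos ((3*(k:ℝ)+2) * (2*θ)))
          - (1/32)*(Real.cos ((3*(k:ℝ)+1) * (4*θ)) + Real.cos ((3*(k:ℝ)+2) * (4*θ))) := by
      intro k _
      rw [g_id (3*(k:ℝ)+1) θ, g_id (3*(k:ℝ)+2) θ]
      ring
    rw [Finset.sum_congr rfl hpoint, Finset.sum_sub_distrib, Finset.sum_add_distrib,
      ← Finset.mul_sum, ← Finset.mul_sum, Finset.sum_const, Finset.card_range,
      nsmul_eq_mul, ← hC2, ← hC4]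
    push_cast
    ring
  -- Dirichlet bounds
  have hA2 := sum_cos_bound (x := 2*θ) (by rw [show (2*θ)/2 = θ by ring]; exact hs1) (3*n+2)
  rw [show (2*θ)/2 = θ by ring] at hA2
  have hB2 := sum_cos_bound (x := 3*(2*θ)) (by rw [show (3*(2*θ))/2 = 3*θ by ring]; exact hs3) n
  rw [show (3*(2*θ))/2 = 3*θ by ring] at hB2
  have hA4 := sum_cos_bound (x := 4*θ) (by rw [show (4*θ)/2 = 2*θ by ring]; exact hs2) (3*n+2)
  rw [show (4*θ)/2 = 2*θ by ring] at hA4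
  have hB4 : ∑ k ∈ Finset.range n, Real.cos (((k:ℝ)+1) * (3*(4*θ))) ≤ (n:ℝ) := by
    calc ∑ k ∈ Finset.range n, Real.cos (((k:ℝ)+1) * (3*(4*θ)))
        ≤ ∑ _k ∈ Finset.range n, (1:ℝ) := Finset.sum_le_sum (fun k _ => Real.cos_le_one _)
      _ = (n:ℝ) := by simp
  have hreg2 := regroup (2*θ) n
  rw [← hC2] at hreg2
  have hreg4 := regroup (4*θ) n
  rw [← hC4] at hreg4
  -- inverse sin bounds
  have hi1 : 1/(2*Real.sin θ) ≤ 1/(2*(p - p^3/4)) :=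
    one_div_le_one_div_of_le (by linarith) (by linarith)
  have hi2 : 1/(2*Real.sin (2*θ)) ≤ 1/(2*(2*p - (2*p)^3/4)) :=
    one_div_le_one_div_of_le (by linarith) (by linarith)
  have hi3 : 1/(2*Real.sin (3*θ)) ≤ 1/(2*(3*p - (3*p)^3/4)) :=
    one_div_le_one_div_of_le (by linarith) (by linarith)
  set D : ℝ := 1 - (3/2)*p^2 with hD
  clear_value D
  have hD0 : 0 < D := by rw [hD]; nlinarith
  have key : 12*(1/(2*(p - p^3/4))) + 12*(1/(2*(3*p - (3*p)^3/4))) + 1/(2*(2*p - (2*p)^3/4))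
      ≤ 33*m/(4*Real.pi*D) := by
    have hk := key_lemma hp0 hp3
    have hrhs : 33*m/(4*Real.pi*D) = 33/(4*p*D) := by
      rw [← hmp]
      have hd : D ≠ 0 := ne_of_gt hD0
      have hpne : p ≠ 0 := ne_of_gt hp0
      field_simp
    rw [hrhs, hD]
    exact hk
  -- final assembly
  have hBv : 1 - 6 * Real.pi ^ 2 / (12 * (n:ℝ) + 8) ^ 2 = D := by
    have h2m : (12*(n:ℝ)+8) = 2*m := by rw [hm]; ring
    rw [h2m, hD, hp]
    have hmne : m ≠ 0 := ne_of_gt hm0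
    field_simp
    ring
  have hgoalE : -(42 * (n:ℝ) + 43) / 64 +
      33 * m / (128 * Real.pi * (1 - 6 * Real.pi ^ 2 / (12 * (n:ℝ) + 8) ^ 2))
      = -(42 * (n:ℝ) + 43) / 64 + (33*m/(4*Real.pi*D))/32 := by
    rw [hBv]
    have h4 : (4*Real.pi*D) ≠ 0 := by nlinarith [mul_pos hπ hD0]
    field_simp
    ring
  have hA2u := (abs_le.mp hA2).2
  have hB2l := (abs_le.mp hB2).1
  have hA4l := (abs_le.mp hA4).1
  have hfinal : T ≤ -(42 * (n:ℝ) + 43) / 64 +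
      33 * m / (128 * Real.pi * (1 - 6 * Real.pi ^ 2 / (12 * (n:ℝ) + 8) ^ 2)) := by
    rw [hgoalE, hTval]
    linarith [hreg2, hreg4, hA2u, hB2l, hA4l, hB4, hi1, hi2, hi3, key]
  calc |∏ k ∈ Finset.range (n + 1),
      (Real.cos ((3 * (k:ℝ) + 1) * θ) * Real.cos ((3 * (k:ℝ) + 2) * θ))|
      ≤ Real.exp T := step1
    _ ≤ _ := Real.exp_le_exp.mpr hfinal
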